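/- arXiv:2006.14497 — 2 statements merged into one kernel-verified Lean document; each statement's English description precedes it below -/
import Mathlib

section
/- Let T > 0, τ > 0 with T/τ ≥ 4, and let N ≥ 1 photons have arrival times t_1, …, t_N that are independent and uniformly distributed on [0, T]. Then the expected number of surviving photons equals E_S(N) = 2(1 − τ/T)^N + (N − 2)(1 − 2τ/T)^N. -/
open MeasureTheory

/-- The uniform probability measure on `[0, T]`. -/
noncomputable def unifIcc (T : ℝ) : Measure ℝ :=
  (ENNReal.ofReal T)⁻¹ • volume.restrict (Set.Icc 0 T)

/-- The number of surviving photons: photon `i` survives if every other photon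
arrives at least `τ` away from it. -/
noncomputable def survivors (τ : ℝ) {N : ℕ} (t : Fin N → ℝ) : ℕ :=
  Set.ncard {i : Fin N | ∀ j : Fin N, j ≠ i → τ ≤ |t i - t j|}

lemma unifIcc_prob {T : ℝ} (hT : 0 < T) : IsProbabilityMeasure (unifIcc T) := by
  constructor
  rw [unifIcc, Measure.smul_apply, Measure.restrict_apply MeasurableSet.univ,
    Set.univ_inter, Real.volume_Icc, sub_zero, smul_eq_mul,
    ENNReal.inv_mul_cancel (by simpa using hT) ENNReal.ofReal_ne_top]

noncomputable def hfun (T τ x : ℝ) : ℝ := (T - (min T (x + τ) - max 0 (x - τ))) / T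

lemma hfun_nonneg {T τ x : ℝ} (hT : 0 < T) : 0 ≤ hfun T τ x := by
  have h1 : min T (x + τ) ≤ T := min_le_left _ _
  have h2 : (0:ℝ) ≤ max 0 (x - τ) := le_max_left _ _
  unfold hfun
  exact div_nonneg (by linarith) hT.le

lemma hfun_continuous (T τ : ℝ) : Continuous (hfun T τ) := by
  unfold hfun; fun_prop

lemma ball_compl (x τ : ℝ) : {z : ℝ | τ ≤ |x - z|} = (Set.Ioo (x - τ) (x + τ))ᶜ := by
  ext z
  simp only [Set.mem_setOf_eq, Set.mem_compl_iff, Set.mem_Ioo]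
  constructor
  · rintro h ⟨h1, h2⟩
    have : |x - z| < τ := abs_sub_lt_iff.mpr ⟨by linarith, by linarith⟩
    linarith
  · intro h
    by_contra hlt
    push_neg at hlt
    obtain ⟨h1, h2⟩ := abs_sub_lt_iff.mp hlt
    exact h ⟨by linarith, by linarith⟩

lemma unifIcc_ball {T τ x : ℝ} (hT : 0 < T) (hτ : 0 < τ) (hx : x ∈ Set.Icc 0 T) :
    unifIcc T {z | τ ≤ |x - z|} = ENNReal.ofReal (hfun T τ x) := by
  obtain ⟨hx0, hxT⟩ := hx
  set a := max 0 (x - τ) with ha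
  set b := min T (x + τ) with hb
  have hab : a ≤ b := by
    have h1 : (0:ℝ) ≤ x := hx0
    have h2 : x - τ ≤ x := by linarith
    have h3 : x ≤ T := hxT
    have h4 : x ≤ x + τ := by linarith
    exact le_trans (max_le h1 h2) (le_min h3 h4)
  have hbT : b ≤ T := min_le_left _ _
  have ha0 : 0 ≤ a := le_max_left _ _
  -- volume of the intersection
  have hvol : volume (Set.Icc 0 T ∩ Set.Ioo (x - τ) (x + τ)) = ENNReal.ofReal (b - a) := by
    apply le_antisymm
    · calc volume (Set.Icc 0 T ∩ Set.Ioo (x - τ) (x + τ))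
          ≤ volume (Set.Icc a b) := by
            apply measure_mono
            rintro z ⟨⟨h1, h2⟩, h3, h4⟩
            exact ⟨max_le h1 h3.le, le_min h2 h4.le⟩
        _ = ENNReal.ofReal (b - a) := Real.volume_Icc
    · calc ENNReal.ofReal (b - a) = volume (Set.Ioo a b) := Real.volume_Ioo.symm
        _ ≤ _ := by
            apply measure_mono
            rintro z ⟨h1, h2⟩
            have := lt_of_le_of_lt (le_max_left (0:ℝ) (x - τ)) h1
            have := lt_of_lt_of_le h2 (min_le_left T (x + τ))
            have := lt_of_le_of_lt (le_max_right (0:ℝ) (x - τ)) h1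
            have := lt_of_lt_of_le h2 (min_le_right T (x + τ))
            exact ⟨⟨le_of_lt ‹(0:ℝ) < z›, le_of_lt ‹z < T›⟩, ‹x - τ < z›, ‹z < x + τ›⟩
  have key : volume ((Set.Ioo (x - τ) (x + τ))ᶜ ∩ Set.Icc 0 T)
      = ENNReal.ofReal (T - (b - a)) := by
    have hdiff : (Set.Ioo (x - τ) (x + τ))ᶜ ∩ Set.Icc 0 T
        = Set.Icc 0 T \ Set.Ioo (x - τ) (x + τ) := by
      rw [Set.diff_eq, Set.inter_comm]
    rw [hdiff, ← Set.diff_inter_self_eq_diff,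
      measure_diff Set.inter_subset_right
        (measurableSet_Ioo.inter measurableSet_Icc).nullMeasurableSet
        (ne_top_of_le_ne_top ENNReal.ofReal_ne_top
          (by rw [Set.inter_comm, hvol])),
      Set.inter_comm, hvol, Real.volume_Icc, sub_zero,
      ← ENNReal.ofReal_sub _ (by linarith)]
  rw [unifIcc, ball_compl, Measure.smul_apply,
    Measure.restrict_apply (measurableSet_Ioo.compl), smul_eq_mul, key, hfun]
  rw [ENNReal.ofReal_div_of_pos hT, ENNReal.div_eq_inv_mul]

section core
variable {T τ : ℝ} {n : ℕ}

/-- The survival event for photon `i`. -/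
def surviveSet (τ : ℝ) (N : ℕ) (i : Fin N) : Set (Fin N → ℝ) :=
  {t | ∀ j : Fin N, j ≠ i → τ ≤ |t i - t j|}

lemma measurable_surviveSet (τ : ℝ) (N : ℕ) (i : Fin N) :
    MeasurableSet (surviveSet τ N i) := by
  have : surviveSet τ N i = ⋂ j, ⋂ (_ : j ≠ i), {t : Fin N → ℝ | τ ≤ |t i - t j|} := by
    ext t; simp [surviveSet]
  rw [this]
  refine MeasurableSet.iInter fun j => MeasurableSet.iInter fun _ => ?_
  exact measurableSet_le (by fun_prop) (by fun_prop)

lemma measure_surviveSet (hT : 0 < T) (i : Fin (n + 1)) :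
    Measure.pi (fun _ : Fin (n + 1) => unifIcc T) (surviveSet τ (n + 1) i)
      = ∫⁻ x, (unifIcc T {z | τ ≤ |x - z|}) ^ n ∂(unifIcc T) := by
  haveI := unifIcc_prob hT
  set e := MeasurableEquiv.piFinSuccAbove (fun _ : Fin (n + 1) => ℝ) i with he
  have hmp := (measurePreserving_piFinSuccAbove (fun _ : Fin (n + 1) => unifIcc T) i).symm
  set S : Set (ℝ × (Fin n → ℝ)) := {p | ∀ k, τ ≤ |p.1 - p.2 k|} with hS
  have hSm : MeasurableSet S := by
    have : S = ⋂ k, {p : ℝ × (Fin n → ℝ) | τ ≤ |p.1 - p.2 k|} := by ext p; simp [hS]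
    rw [this]
    exact MeasurableSet.iInter fun k => measurableSet_le (by fun_prop) (by fun_prop)
  have hpre : e.symm ⁻¹' (surviveSet τ (n + 1) i) = S := by
    ext ⟨x, y⟩
    simp only [Set.mem_preimage, surviveSet, Set.mem_setOf_eq, hS]
    have hsymm : e.symm (x, y) = i.insertNth x y := rfl
    rw [hsymm]
    constructor
    · intro h k
      have := h (i.succAbove k) (Fin.succAbove_ne i k)
      rwa [Fin.insertNth_apply_same, Fin.insertNth_apply_succAbove] at this
    · intro h j hj
      obtain ⟨k, rfl⟩ := Fin.exists_succAbove_eq hj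
      rw [Fin.insertNth_apply_same, Fin.insertNth_apply_succAbove]
      exact h k
  calc Measure.pi (fun _ : Fin (n + 1) => unifIcc T) (surviveSet τ (n + 1) i)
      = ((unifIcc T).prod (Measure.pi fun _ : Fin n => unifIcc T))
          (e.symm ⁻¹' (surviveSet τ (n + 1) i)) :=
        (hmp.measure_preimage (measurable_surviveSet τ (n + 1) i).nullMeasurableSet).symm
    _ = ∫⁻ x, (Measure.pi fun _ : Fin n => unifIcc T) (Prod.mk x ⁻¹' S) ∂(unifIcc T) := by
        rw [hpre, Measure.prod_apply hSm]
    _ = ∫⁻ x, (unifIcc T {z | τ ≤ |x - z|}) ^ n ∂(unifIcc T) := by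
        congr 1
        funext x
        have : Prod.mk x ⁻¹' S = Set.pi Set.univ (fun _ : Fin n => {z | τ ≤ |x - z|}) := by
          ext y; simp [hS, Set.mem_pi]
        rw [this, Measure.pi_pi, Finset.prod_const, Finset.card_univ, Fintype.card_fin]

end core

section core2
variable {T τ : ℝ} {n : ℕ}

lemma measure_surviveSet_toReal (hT : 0 < T) (hτ : 0 < τ) (i : Fin (n + 1)) :
    (Measure.pi (fun _ : Fin (n + 1) => unifIcc T) (surviveSet τ (n + 1) i)).toReal
      = ∫ x, hfun T τ x ^ n ∂(unifIcc T) := by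
  rw [measure_surviveSet hT i]
  have hae : ∀ᵐ x ∂(unifIcc T),
      unifIcc T {z | τ ≤ |x - z|} = ENNReal.ofReal (hfun T τ x) := by
    rw [unifIcc]
    refine Measure.ae_smul_measure ?_ _
    filter_upwards [ae_restrict_mem measurableSet_Icc] with x hx
    exact unifIcc_ball hT hτ hx
  rw [lintegral_congr_ae (hae.mono fun x hx => by rw [hx])]
  rw [← integral_toReal
    ((((hfun_continuous T τ).measurable.ennreal_ofReal).pow_const n).aemeasurable)
    (Filter.Eventually.of_forall fun x => ENNReal.pow_lt_top ENNReal.ofReal_lt_top)]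
  refine integral_congr_ae (Filter.Eventually.of_forall fun x => ?_)
  simp only [ENNReal.toReal_pow, ENNReal.toReal_ofReal (hfun_nonneg hT)]

lemma integral_hfun_pow (hT : 0 < T) (hτ : 0 < τ) (h4 : 4 * τ ≤ T) :
    ∫ x in Set.Icc 0 T, hfun T τ x ^ n
      = 2 * (((T - τ) ^ (n + 1) - (T - 2 * τ) ^ (n + 1)) / (n + 1) / T ^ n)
        + (T - 2 * τ) * ((T - 2 * τ) / T) ^ n := by
  have hint : ∀ a b : ℝ, IntervalIntegrable (fun x => hfun T τ x ^ n) volume a b :=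
    fun a b => ((hfun_continuous T τ).pow n).intervalIntegrable a b
  have h1 : (0:ℝ) ≤ τ := hτ.le
  have h2 : τ ≤ T - τ := by linarith
  have h3 : T - τ ≤ T := by linarith
  rw [MeasureTheory.integral_Icc_eq_integral_Ioc,
    ← intervalIntegral.integral_of_le hT.le,
    ← intervalIntegral.integral_add_adjacent_intervals (hint 0 τ) (hint τ T),
    ← intervalIntegral.integral_add_adjacent_intervals (hint τ (T - τ)) (hint (T - τ) T)]
  have p1 : ∫ x in (0:ℝ)..τ, hfun T τ x ^ n
      = ((T - τ) ^ (n + 1) - (T - 2 * τ) ^ (n + 1)) / (n + 1) / T ^ n := by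
    have : ∫ x in (0:ℝ)..τ, hfun T τ x ^ n
        = ∫ x in (0:ℝ)..τ, ((T - τ - x) / T) ^ n := by
      refine intervalIntegral.integral_congr fun x hx => ?_
      rw [Set.uIcc_of_le h1] at hx
      obtain ⟨hx0, hxτ⟩ := hx
      rw [hfun, min_eq_right (by linarith), max_eq_left (by linarith)]
      ring_nf
    rw [this]
    have := intervalIntegral.integral_comp_sub_left (a := (0:ℝ)) (b := τ)
      (fun y => (y / T) ^ n) (T - τ)
    rw [this]
    simp only [div_pow]
    rw [intervalIntegral.integral_div, integral_pow]
    ring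
  have p2 : ∫ x in τ..(T - τ), hfun T τ x ^ n = (T - 2 * τ) * ((T - 2 * τ) / T) ^ n := by
    have : ∫ x in τ..(T - τ), hfun T τ x ^ n
        = ∫ _ in τ..(T - τ), ((T - 2 * τ) / T) ^ n := by
      refine intervalIntegral.integral_congr fun x hx => ?_
      rw [Set.uIcc_of_le h2] at hx
      obtain ⟨hxl, hxr⟩ := hx
      rw [hfun, min_eq_right (by linarith), max_eq_right (by linarith)]
      ring_nf
    rw [this, intervalIntegral.integral_const, smul_eq_mul]
    ring
  have p3 : ∫ x in (T - τ)..T, hfun T τ x ^ n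
      = ((T - τ) ^ (n + 1) - (T - 2 * τ) ^ (n + 1)) / (n + 1) / T ^ n := by
    have : ∫ x in (T - τ)..T, hfun T τ x ^ n
        = ∫ x in (T - τ)..T, ((x - τ) / T) ^ n := by
      refine intervalIntegral.integral_congr fun x hx => ?_
      rw [Set.uIcc_of_le h3] at hx
      obtain ⟨hxl, hxr⟩ := hx
      rw [hfun, min_eq_left (by linarith), max_eq_right (by linarith)]
      ring_nf
    rw [this]
    rw [intervalIntegral.integral_comp_sub_right (fun y => (y / T) ^ n) τ]
    simp only [div_pow]
    rw [intervalIntegral.integral_div, integral_pow]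
    ring
  rw [p1, p2, p3]
  ring

end core2

/-- **part of Theorem 1 of the paper.** For `T/τ ≥ 4` and `N ≥ 1`
photons with i.i.d. uniform arrival times on `[0, T]`, the expected number of
surviving photons is `2(1 − τ/T)^N + (N − 2)(1 − 2τ/T)^N`. -/
theorem expected_surviving_photons (T τ : ℝ) (hT : 0 < T) (hτ : 0 < τ)
    (hratio : 4 ≤ T / τ) (N : ℕ) (hN : 1 ≤ N) :
    ∫ t : Fin N → ℝ, (survivors τ t : ℝ)
        ∂(Measure.pi fun _ : Fin N => unifIcc T) =
      2 * (1 - τ / T) ^ N + ((N : ℝ) - 2) * (1 - 2 * τ / T) ^ N := by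
  classical
  obtain ⟨n, rfl⟩ : ∃ n, N = n + 1 := ⟨N - 1, (Nat.succ_pred_eq_of_pos hN).symm⟩
  haveI := unifIcc_prob hT
  have h4 : 4 * τ ≤ T := by
    rw [le_div_iff₀ hτ] at hratio
    linarith
  have hT0 : T ≠ 0 := hT.ne'
  -- rewrite survivors as a sum of indicators
  have hsum : ∀ t : Fin (n + 1) → ℝ, (survivors τ t : ℝ)
      = ∑ i : Fin (n + 1), (surviveSet τ (n + 1) i).indicator (1 : (Fin (n+1) → ℝ) → ℝ) t := by
    intro t
    have h1 : survivors τ t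
        = (Finset.univ.filter fun i => t ∈ surviveSet τ (n + 1) i).card := by
      rw [survivors, Set.ncard_eq_toFinset_card', Set.toFinset_setOf]
      simp only [surviveSet, Set.mem_setOf_eq]
    rw [h1, Finset.card_filter]
    push_cast
    refine Finset.sum_congr rfl fun i _ => ?_
    rw [Set.indicator_apply]
    split <;> simp
  have hint : ∀ i ∈ (Finset.univ : Finset (Fin (n + 1))),
      Integrable (fun a : Fin (n + 1) → ℝ => (surviveSet τ (n + 1) i).indicator 1 a)
        (Measure.pi fun _ : Fin (n + 1) => unifIcc T) :=
    fun i _ => (integrable_const (1:ℝ)).indicator (measurable_surviveSet τ (n + 1) i)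
  rw [integral_congr_ae (Filter.Eventually.of_forall hsum), integral_finset_sum _ hint]
  have heach : ∀ i : Fin (n + 1),
      ∫ t, (surviveSet τ (n + 1) i).indicator (1 : (Fin (n+1) → ℝ) → ℝ) t
          ∂(Measure.pi fun _ : Fin (n + 1) => unifIcc T)
        = T⁻¹ * (2 * (((T - τ) ^ (n + 1) - (T - 2 * τ) ^ (n + 1)) / (n + 1) / T ^ n)
            + (T - 2 * τ) * ((T - 2 * τ) / T) ^ n) := by
    intro i
    rw [integral_indicator_one (measurable_surviveSet τ (n + 1) i), measureReal_def,
      measure_surviveSet_toReal hT hτ i, unifIcc, integral_smul_measure,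
      integral_hfun_pow hT hτ h4, ENNReal.toReal_inv, ENNReal.toReal_ofReal hT.le,
      smul_eq_mul]
  rw [Finset.sum_congr rfl fun i _ => heach i, Finset.sum_const, Finset.card_univ,
    Fintype.card_fin, nsmul_eq_mul]
  have e1 : 1 - τ / T = (T - τ) / T := by field_simp
  have e2 : 1 - 2 * τ / T = (T - 2 * τ) / T := by field_simp
  rw [e1, e2, div_pow, div_pow]
  have hn1 : ((n : ℝ) + 1) ≠ 0 := by positivity
  have hTn : (T : ℝ) ^ n ≠ 0 := pow_ne_zero n hT0
  push_cast
  simp only [div_pow]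
  field_simp
  ring
end

section
/- Let T > 0, τ > 0 with T/τ ≥ 4 and λ > 0. Then the Poisson mixture of the conditional second moment of the number of surviving photons satisfies D_λ = Σ_{N=0}^∞ e^{−λT} (λT)^N / N! · [2(1 − τ/T)^N + (N + 4)(1 − 2τ/T)^N + (N² − 7N + 12)(1 − 4τ/T)^N + (6N − 18)(1 − 3τ/T)^N] = 2 e^{−λτ} + (λ(T − 2τ) + 4) e^{−2λτ} + (6(λT − 3λτ) − 18) e^{−3λτ} + ((λT − 4λτ)² − 6(λT − 4λτ) + 12) e^{−4λτ}. -/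
lemma psm_sum0 (y : ℝ) : ∑' n : ℕ, y ^ n / n.factorial = Real.exp y := by
  rw [Real.exp_eq_exp_ℝ, NormedSpace.exp_eq_tsum_div]

lemma psm_shift1 (y : ℝ) (n : ℕ) :
    ((n+1 : ℕ) : ℝ) * (y ^ (n+1) / (n+1).factorial) = y * (y ^ n / n.factorial) := by
  rw [Nat.factorial_succ]
  push_cast
  have h1 : ((n:ℝ) + 1) ≠ 0 := by positivity
  have h2 : ((n.factorial : ℝ)) ≠ 0 := by positivity
  field_simp
  ring

lemma psm_summ1 (y : ℝ) : Summable (fun n : ℕ => (n : ℝ) * (y ^ n / n.factorial)) := by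
  apply (summable_nat_add_iff 1).mp
  exact Summable.congr ((Real.summable_pow_div_factorial y).mul_left y)
    (fun n => (psm_shift1 y n).symm)

lemma psm_sum1 (y : ℝ) : ∑' n : ℕ, (n : ℝ) * (y ^ n / n.factorial) = y * Real.exp y := by
  rw [Summable.tsum_eq_zero_add (psm_summ1 y)]
  simp only [Nat.cast_zero, zero_mul, zero_add]
  rw [tsum_congr (fun n => by exact_mod_cast psm_shift1 y n), tsum_mul_left, psm_sum0]

lemma psm_shift2 (y : ℝ) (n : ℕ) :
    ((n+1 : ℕ) : ℝ)^2 * (y ^ (n+1) / (n+1).factorial)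
      = y * ((n:ℝ) * (y ^ n / n.factorial)) + y * (y ^ n / n.factorial) := by
  have := psm_shift1 y n
  push_cast at this ⊢
  nlinarith [this]

lemma psm_summ2 (y : ℝ) : Summable (fun n : ℕ => (n : ℝ)^2 * (y ^ n / n.factorial)) := by
  apply (summable_nat_add_iff 1).mp
  exact Summable.congr (((psm_summ1 y).mul_left y).add
    ((Real.summable_pow_div_factorial y).mul_left y)) (fun n => (psm_shift2 y n).symm)

lemma psm_sum2 (y : ℝ) :
    ∑' n : ℕ, (n : ℝ)^2 * (y ^ n / n.factorial) = (y^2 + y) * Real.exp y := by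
  rw [Summable.tsum_eq_zero_add (psm_summ2 y)]
  norm_num
  rw [tsum_congr (fun n => by exact_mod_cast psm_shift2 y n),
    Summable.tsum_add ((psm_summ1 y).mul_left y) ((Real.summable_pow_div_factorial y).mul_left y),
    tsum_mul_left, tsum_mul_left, psm_sum0, psm_sum1]
  ring

/-- For `T/τ ≥ 4` and rate `lv > 0`, the Poisson mixture of the
conditional second moment of the number of surviving photons equals the
displayed closed form. -/
theorem poisson_second_moment_surviving (T τ lv : ℝ) (hT : 0 < T) (hτ : 0 < τ)
    (hratio : 4 ≤ T / τ) (hlv : 0 < lv) :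
    ∑' N : ℕ, Real.exp (-(lv * T)) * (lv * T) ^ N / N.factorial *
        (2 * (1 - τ / T) ^ N + ((N : ℝ) + 4) * (1 - 2 * τ / T) ^ N
          + ((N : ℝ) ^ 2 - 7 * (N : ℝ) + 12) * (1 - 4 * τ / T) ^ N
          + (6 * (N : ℝ) - 18) * (1 - 3 * τ / T) ^ N) =
      2 * Real.exp (-(lv * τ)) + (lv * (T - 2 * τ) + 4) * Real.exp (-(2 * lv * τ))
        + (6 * (lv * T - 3 * lv * τ) - 18) * Real.exp (-(3 * lv * τ))
        + ((lv * T - 4 * lv * τ) ^ 2 - 6 * (lv * T - 4 * lv * τ) + 12)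
            * Real.exp (-(4 * lv * τ)) := by
  have hT' : T ≠ 0 := ne_of_gt hT
  have e1 : lv * T - 1 * (lv * τ) = (1 - τ / T) * (lv * T) := by field_simp
  have e2 : lv * T - 2 * (lv * τ) = (1 - 2 * τ / T) * (lv * T) := by field_simp
  have e3 : lv * T - 3 * (lv * τ) = (1 - 3 * τ / T) * (lv * T) := by field_simp
  have e4 : lv * T - 4 * (lv * τ) = (1 - 4 * τ / T) * (lv * T) := by field_simp
  have key : ∀ N : ℕ, Real.exp (-(lv * T)) * (lv * T) ^ N / N.factorial *
        (2 * (1 - τ / T) ^ N + ((N : ℝ) + 4) * (1 - 2 * τ / T) ^ N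
          + ((N : ℝ) ^ 2 - 7 * (N : ℝ) + 12) * (1 - 4 * τ / T) ^ N
          + (6 * (N : ℝ) - 18) * (1 - 3 * τ / T) ^ N)
      = Real.exp (-(lv * T)) *
        (2 * ((lv * T - 1 * (lv * τ)) ^ N / N.factorial)
          + ((N:ℝ) * ((lv * T - 2 * (lv * τ)) ^ N / N.factorial)
             + 4 * ((lv * T - 2 * (lv * τ)) ^ N / N.factorial))
          + ((N:ℝ)^2 * ((lv * T - 4 * (lv * τ)) ^ N / N.factorial)
             + (-7) * ((N:ℝ) * ((lv * T - 4 * (lv * τ)) ^ N / N.factorial))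
             + 12 * ((lv * T - 4 * (lv * τ)) ^ N / N.factorial))
          + (6 * ((N:ℝ) * ((lv * T - 3 * (lv * τ)) ^ N / N.factorial))
             + (-18) * ((lv * T - 3 * (lv * τ)) ^ N / N.factorial))) := by
    intro N
    simp only [e1, e2, e3, e4, mul_pow]
    ring
  rw [tsum_congr key, tsum_mul_left]
  have s0 : ∀ y : ℝ, Summable (fun n : ℕ => y ^ n / (n.factorial : ℝ)) :=
    fun y => Real.summable_pow_div_factorial y
  have SA := (s0 (lv * T - 1 * (lv * τ))).mul_left 2
  have SB := (psm_summ1 (lv * T - 2 * (lv * τ))).add ((s0 (lv * T - 2 * (lv * τ))).mul_left 4)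
  have SC := ((psm_summ2 (lv * T - 4 * (lv * τ))).add
      ((psm_summ1 (lv * T - 4 * (lv * τ))).mul_left (-7))).add
      ((s0 (lv * T - 4 * (lv * τ))).mul_left 12)
  have SD := ((psm_summ1 (lv * T - 3 * (lv * τ))).mul_left 6).add
      ((s0 (lv * T - 3 * (lv * τ))).mul_left (-18))
  rw [Summable.tsum_add ((SA.add SB).add SC) SD, Summable.tsum_add (SA.add SB) SC, Summable.tsum_add SA SB,
    Summable.tsum_add (psm_summ1 _) ((s0 _).mul_left 4),
    Summable.tsum_add ((psm_summ2 _).add ((psm_summ1 _).mul_left (-7))) ((s0 _).mul_left 12),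
    Summable.tsum_add (psm_summ2 _) ((psm_summ1 _).mul_left (-7)),
    Summable.tsum_add ((psm_summ1 _).mul_left 6) ((s0 _).mul_left (-18)),
    tsum_mul_left, tsum_mul_left, tsum_mul_left, tsum_mul_left, tsum_mul_left, tsum_mul_left,
    psm_sum0, psm_sum0, psm_sum0, psm_sum0, psm_sum1, psm_sum1, psm_sum1, psm_sum2]
  have m1 : Real.exp (-(lv * T)) * Real.exp (lv * T - 1 * (lv * τ)) = Real.exp (-(lv * τ)) := by
    rw [← Real.exp_add]; congr 1; ring
  have m2 : Real.exp (-(lv * T)) * Real.exp (lv * T - 2 * (lv * τ)) = Real.exp (-(2 * lv * τ)) := by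
    rw [← Real.exp_add]; congr 1; ring
  have m3 : Real.exp (-(lv * T)) * Real.exp (lv * T - 3 * (lv * τ)) = Real.exp (-(3 * lv * τ)) := by
    rw [← Real.exp_add]; congr 1; ring
  have m4 : Real.exp (-(lv * T)) * Real.exp (lv * T - 4 * (lv * τ)) = Real.exp (-(4 * lv * τ)) := by
    rw [← Real.exp_add]; congr 1; ring
  linear_combination 2 * m1 + (lv * T - 2 * (lv * τ) + 4) * m2
    + (6 * (lv * T - 3 * (lv * τ)) - 18) * m3
    + ((lv * T - 4 * (lv * τ))^2 - 6 * (lv * T - 4 * (lv * τ)) + 12) * m4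
end
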